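/- For every integer k ≥ 3, the (6k²−6k−1)-fan has edge-crossing width at least k. -/

import Mathlib

open SimpleGraph

universe u

/-- A tree-cut decomposition of a graph `G`: a finite tree `T` together with
pairwise disjoint (possibly empty) bags covering the vertex set of `G`. -/
structure TreeCutDecomp {V : Type u} (G : SimpleGraph V) where
  β : Type
  fintypeβ : Fintype β
  T : SimpleGraph β
  isTree : T.IsTree
  bag : β → Set V
  disj : Pairwise fun s t => Disjoint (bag s) (bag t)
  covers : ∀ v : V, ∃ t, v ∈ bag t

namespace TreeCutDecomp

variable {V : Type u} {G : SimpleGraph V}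

/-- The edge `e` of `G` crosses the bag at node `t`: its endpoints lie in bag-unions of
two distinct components of `T - t`. -/
def Crosses (D : TreeCutDecomp G) (t : D.β) (e : Sym2 V) : Prop :=
  e ∈ G.edgeSet ∧ ∃ (u v : V) (s₁ s₂ : D.β) (h₁ : s₁ ≠ t) (h₂ : s₂ ≠ t),
    e = s(u, v) ∧ u ∈ D.bag s₁ ∧ v ∈ D.bag s₂ ∧
    ¬ (D.T.induce {x | x ≠ t}).Reachable ⟨s₁, h₁⟩ ⟨s₂, h₂⟩

/-- The number of edges crossing the bag at node `t`. -/
noncomputable def crossNum (D : TreeCutDecomp G) (t : D.β) : ℕ :=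
  {e : Sym2 V | D.Crosses t e}.ncard

/-- The crossing number of the decomposition is at most `k`. -/
def CrossLE (D : TreeCutDecomp G) (k : ℕ) : Prop := ∀ t, D.crossNum t ≤ k

/-- The thickness (maximum bag size) of the decomposition is at most `a`. -/
def ThickLE (D : TreeCutDecomp G) (a : ℕ) : Prop := ∀ t, (D.bag t).ncard ≤ a

end TreeCutDecomp

/-- The `α`-edge-crossing width: minimum crossing number over tree-cut decompositions
of thickness at most `α`. -/
noncomputable def ecrwA {V : Type u} (G : SimpleGraph V) (a : ℕ) : ℕ :=
  sInf {k | ∃ D : TreeCutDecomp G, D.ThickLE a ∧ D.CrossLE k}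

/-- The edge-crossing width: minimum over tree-cut decompositions of the maximum of the
thickness and the crossing number. -/
noncomputable def ecrw {V : Type u} (G : SimpleGraph V) : ℕ :=
  sInf {k | ∃ D : TreeCutDecomp G, D.ThickLE k ∧ D.CrossLE k}

/-- The `n`-fan: a path on `n` vertices (`Sum.inl i`, `i = 0, …, n-1`) together with an
apex vertex (`Sum.inr ()`) adjacent to all path vertices. -/
def fan (n : ℕ) : SimpleGraph (Fin n ⊕ Unit) :=
  SimpleGraph.fromRel fun x y =>
    match x, y with
    | Sum.inl i, Sum.inl j => (j : ℕ) = (i : ℕ) + 1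
    | Sum.inr _, Sum.inl _ => True
    | _, _ => False

def trivDecomp {V : Type u} (G : SimpleGraph V) : TreeCutDecomp G where
  β := Unit
  fintypeβ := inferInstance
  T := ⊥
  isTree := by
    constructor
    · constructor
      · intro a b; rw [Subsingleton.elim a b]
    · simp
  bag := fun _ => Set.univ
  disj := by intro a b hab; exact absurd (Subsingleton.elim a b) hab
  covers := fun v => ⟨(), trivial⟩

lemma trivDecomp_thick {V : Type u} [Fintype V] (G : SimpleGraph V) :
    (trivDecomp G).ThickLE (Fintype.card V) := by
  intro t
  simp [trivDecomp, Set.ncard_univ, Nat.card_eq_fintype_card]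

lemma trivDecomp_cross {V : Type u} (G : SimpleGraph V) (k : ℕ) :
    (trivDecomp G).CrossLE k := by
  intro t
  have : {e : Sym2 V | (trivDecomp G).Crosses t e} = ∅ := by
    ext e
    simp only [Set.mem_setOf_eq, Set.mem_empty_iff_false, iff_false]
    rintro ⟨-, u, v, s₁, s₂, h₁, -, -⟩
    exact h₁ rfl
  rw [TreeCutDecomp.crossNum, this]
  simp

-- ### tree lemmas (already tested)
section TreeAux
variable {β : Type*} {T : SimpleGraph β}

lemma path_eq_of_acyclic (hT : T.IsAcyclic) {a b : β} (p q : T.Walk a b)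
    (hp : p.IsPath) (hq : q.IsPath) : p = q :=
  congrArg Subtype.val (hT.path_unique ⟨p, hp⟩ ⟨q, hq⟩)

lemma path_support_subset_walk (hT : T.IsAcyclic) {a b : β} (p W : T.Walk a b)
    (hp : p.IsPath) : p.support ⊆ W.support := by
  classical
  have h : p = W.bypass := path_eq_of_acyclic hT p W.bypass hp W.bypass_isPath
  rw [h]; exact W.support_bypass_subset

lemma not_reach_of_mem_path (hT : T.IsAcyclic) {a b t : β} (p : T.Walk a b)
    (hp : p.IsPath) (ht : t ∈ p.support) (ha : a ≠ t) (hb : b ≠ t) :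
    ¬ (T.induce {x | x ≠ t}).Reachable ⟨a, ha⟩ ⟨b, hb⟩ := by
  rintro ⟨W'⟩
  have hW : t ∈ (W'.map (SimpleGraph.Embedding.induce {x | x ≠ t}).toHom).support :=
    path_support_subset_walk hT p _ hp ht
  rw [SimpleGraph.Walk.support_map] at hW
  obtain ⟨x, _, hx'⟩ := List.mem_map.mp hW
  exact x.prop hx'

lemma mem_support_of_induce_walk {s : Set β} {a b : ↥s} (W : (T.induce s).Walk a b)
    {t : β} (ht : t ∈ (W.map (SimpleGraph.Embedding.induce s).toHom).support) : t ∈ s := by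
  rw [SimpleGraph.Walk.support_map] at ht
  obtain ⟨x, _, hx'⟩ := List.mem_map.mp ht
  exact hx' ▸ x.prop

end TreeAux

-- ### counting helper (tested)
lemma card_filter_le_ncard {α γ : Type*} (s : Finset α) (P : α → Prop) [DecidablePred P]
    (f : α → γ) (S : Set γ) (hf : ∀ a ∈ s, P a → f a ∈ S)
    (hinj : Set.InjOn f (s.filter P)) (hS : S.Finite) :
    (s.filter P).card ≤ S.ncard := by
  classical
  have hsub : ↑((s.filter P).image f) ⊆ S := by
    intro x hx
    simp only [Finset.coe_image, Set.mem_image, Finset.mem_coe, Finset.mem_filter] at hx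
    obtain ⟨a, ⟨ha, hPa⟩, rfl⟩ := hx
    exact hf a ha hPa
  have h := Set.ncard_le_ncard hsub hS
  rwa [Set.ncard_coe_finset, Finset.card_image_of_injOn (by simpa using hinj)] at h

lemma fan_adj_apex {n : ℕ} (i : Fin n) : (fan n).Adj (Sum.inr ()) (Sum.inl i) := by
  simp [fan, SimpleGraph.fromRel_adj]

lemma fan_adj_path {n : ℕ} (i j : Fin n) (h : (j : ℕ) = (i : ℕ) + 1) :
    (fan n).Adj (Sum.inl i) (Sum.inl j) := by
  simp only [fan, SimpleGraph.fromRel_adj]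
  refine ⟨?_, Or.inl h⟩
  intro he
  injection he with he'
  omega

-- ### the decomposition machinery
namespace FanCount
attribute [local instance 0] Classical.propDecidable

variable {n : ℕ} (D : TreeCutDecomp (fan n))

/-- vertex with index `i` (apex if out of range) -/
def vna (n : ℕ) (i : ℕ) : Fin n ⊕ Unit :=
  if h : i < n then Sum.inl ⟨i, h⟩ else Sum.inr ()

lemma vna_lt {i : ℕ} (h : i < n) : vna n i = Sum.inl ⟨i, h⟩ := dif_pos h

/-- the node whose bag contains a given vertex -/
noncomputable def nd (x : Fin n ⊕ Unit) : D.β := (D.covers x).choose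

lemma mem_nd (x : Fin n ⊕ Unit) : x ∈ D.bag (nd D x) := (D.covers x).choose_spec

/-- node of the apex -/
noncomputable def bs : D.β := nd D (Sum.inr ())

/-- node of path vertex `i` -/
noncomputable def bofi (i : ℕ) : D.β := nd D (vna n i)

/-- the unique path from the apex node to `s` -/
noncomputable def pth (s : D.β) : D.T.Walk (bs D) s :=
  (D.isTree.existsUnique_path (bs D) s).choose

lemma pth_isPath (s : D.β) : (pth D s).IsPath :=
  (D.isTree.existsUnique_path (bs D) s).choose_spec.1

lemma pth_unique {s : D.β} (q : D.T.Walk (bs D) s) (hq : q.IsPath) : q = pth D s :=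
  path_eq_of_acyclic D.isTree.IsAcyclic q (pth D s) hq (pth_isPath D s)

/-- the neighbor of the apex node towards `s` -/
noncomputable def cn (s : D.β) : D.β := (pth D s).getVert 1

lemma pth_not_nil {s : D.β} (hs : s ≠ bs D) : ¬ (pth D s).Nil :=
  SimpleGraph.Walk.not_nil_of_ne (Ne.symm hs)

lemma adj_cn {s : D.β} (hs : s ≠ bs D) : D.T.Adj (bs D) (cn D s) :=
  SimpleGraph.Walk.adj_snd (pth_not_nil D hs)

lemma cn_ne_bs {s : D.β} (hs : s ≠ bs D) : cn D s ≠ bs D :=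
  fun h => D.T.loopless.irrefl (bs D) (h ▸ adj_cn D hs)

lemma support_eq_cons_tail {s : D.β} (hs : s ≠ bs D) :
    bs D :: (pth D s).tail.support = (pth D s).support :=
  SimpleGraph.Walk.cons_support_tail (pth_not_nil D hs)

lemma cn_mem_support {s : D.β} (hs : s ≠ bs D) : cn D s ∈ (pth D s).support := by
  rw [← support_eq_cons_tail D hs]
  exact List.mem_cons_of_mem _ ((pth D s).tail.start_mem_support)

lemma bs_not_mem_tail {s : D.β} (hs : s ≠ bs D) : bs D ∉ (pth D s).tail.support := by
  have hnd := (pth_isPath D s).support_nodup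
  rw [← support_eq_cons_tail D hs] at hnd
  exact (List.nodup_cons.mp hnd).1

/-- Key lemma 1: if `s ∉ {bs, cn s}` then `cn s` separates `bs` from `s`. -/
lemma K1 {s : D.β} (hs : s ≠ bs D) (hscn : s ≠ cn D s)
    (h1 : bs D ≠ cn D s) (h2 : s ≠ cn D s) :
    ¬ (D.T.induce {x | x ≠ cn D s}).Reachable ⟨bs D, h1⟩ ⟨s, h2⟩ :=
  not_reach_of_mem_path D.isTree.IsAcyclic (pth D s) (pth_isPath D s)
    (cn_mem_support D hs) h1 h2

/-- Key lemma 2: if `cn s₁ ≠ cn s₂` then `bs` separates `s₁` from `s₂`. -/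
lemma K2 {s₁ s₂ : D.β} (hs₁ : s₁ ≠ bs D) (hs₂ : s₂ ≠ bs D) (hc : cn D s₁ ≠ cn D s₂) :
    ¬ (D.T.induce {x | x ≠ bs D}).Reachable ⟨s₁, hs₁⟩ ⟨s₂, hs₂⟩ := by
  classical
  rintro ⟨W'⟩
  set W : D.T.Walk s₁ s₂ :=
    W'.map (SimpleGraph.Embedding.induce {x | x ≠ bs D}).toHom with hWdef
  have hbsW : bs D ∉ W.support := by
    intro h
    exact mem_support_of_induce_walk W' h rfl
  have hQ0sup : bs D ∉ ((pth D s₁).tail.append W).bypass.support := by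
    intro h
    have h2 := SimpleGraph.Walk.support_bypass_subset _ h
    rw [SimpleGraph.Walk.support_append] at h2
    rcases List.mem_append.mp h2 with h3 | h3
    · exact bs_not_mem_tail D hs₁ h3
    · exact hbsW (List.mem_of_mem_tail h3)
  have hQpath : (SimpleGraph.Walk.cons (adj_cn D hs₁)
      ((pth D s₁).tail.append W).bypass).IsPath :=
    SimpleGraph.Walk.IsPath.cons (SimpleGraph.Walk.bypass_isPath _) hQ0sup
  have hQeq := pth_unique D _ hQpath
  have heq : cn D s₂ = cn D s₁ := by
    have h5 := congrArg (fun (q : D.T.Walk (bs D) s₂) => q.getVert 1) hQeq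
    have h6 : (SimpleGraph.Walk.cons (adj_cn D hs₁) ((pth D s₁).tail.append W).bypass).getVert 1 = cn D s₁ := by
      exact SimpleGraph.Walk.snd_cons _ _
    exact h5.symm.trans h6
  exact hc heq.symm

variable {m : ℕ}

lemma crossSet_finite (u : D.β) : {e : Sym2 (Fin n ⊕ Unit) | D.Crosses u e}.Finite :=
  Set.toFinite _

lemma card_b_fiber (hth : D.ThickLE m) (u : D.β) :
    ((Finset.range n).filter (fun i => bofi D i = u)).card ≤ m := by
  classical
  refine le_trans (card_filter_le_ncard _ _ (vna n) (D.bag u) ?_ ?_ (Set.toFinite _)) (hth u)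
  · intro i _ hP
    have := mem_nd D (vna n i)
    rwa [show nd D (vna n i) = u from hP] at this
  · intro i hi j hj hij
    simp only [Finset.coe_filter, Set.mem_setOf_eq, Finset.mem_range] at hi hj
    rw [vna_lt hi.1, vna_lt hj.1] at hij
    simpa using hij

lemma card_apex_cross (hcr : D.CrossLE m) (u : D.β) (hbu : bs D ≠ u) :
    ((Finset.range n).filter (fun i => ∃ h1 : bofi D i ≠ u,
      ¬ (D.T.induce {x | x ≠ u}).Reachable ⟨bs D, hbu⟩ ⟨bofi D i, h1⟩)).card ≤ m := by
  classical
  refine le_trans (card_filter_le_ncard _ _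
    (fun i => s(Sum.inr (), vna n i)) {e | D.Crosses u e} ?_ ?_ (crossSet_finite D u)) (hcr u)
  · rintro i hi ⟨h1, hreach⟩
    rw [Finset.mem_range] at hi
    refine ⟨?_, Sum.inr (), vna n i, bs D, bofi D i, hbu, h1, rfl, mem_nd D _, mem_nd D _, hreach⟩
    show s(Sum.inr (), vna n i) ∈ (fan n).edgeSet
    rw [vna_lt hi]
    exact (fan n).mem_edgeSet.mpr (fan_adj_apex _)
  · intro i hi j hj hij
    simp only [Finset.coe_filter, Set.mem_setOf_eq, Finset.mem_range] at hi hj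
    have hij' : s(Sum.inr (), vna n i) = s(Sum.inr (), vna n j) := hij
    rw [vna_lt hi.1, vna_lt hj.1, Sym2.eq_iff] at hij'
    rcases hij' with ⟨-, h⟩ | ⟨h, -⟩
    · simpa using h
    · simp at h

lemma card_path_cross (hcr : D.CrossLE m) :
    ((Finset.range n).filter (fun j => j + 1 < n ∧ ∃ (h1 : bofi D j ≠ bs D)
      (h2 : bofi D (j+1) ≠ bs D),
      ¬ (D.T.induce {x | x ≠ bs D}).Reachable ⟨bofi D j, h1⟩ ⟨bofi D (j+1), h2⟩)).card ≤ m := by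
  classical
  refine le_trans (card_filter_le_ncard _ _
    (fun j => s(vna n j, vna n (j+1))) {e | D.Crosses (bs D) e} ?_ ?_
    (crossSet_finite D (bs D))) (hcr (bs D))
  · rintro j hj ⟨hj1, h1, h2, hreach⟩
    refine ⟨?_, vna n j, vna n (j+1), bofi D j, bofi D (j+1), h1, h2, rfl,
      mem_nd D _, mem_nd D _, hreach⟩
    show s(vna n j, vna n (j+1)) ∈ (fan n).edgeSet
    rw [vna_lt (by omega : j < n), vna_lt hj1]
    exact (fan n).mem_edgeSet.mpr (fan_adj_path _ _ rfl)
  · intro i hi j hj hij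
    simp only [Finset.coe_filter, Set.mem_setOf_eq, Finset.mem_range] at hi hj
    obtain ⟨-, hi1, -⟩ := hi
    obtain ⟨-, hj1, -⟩ := hj
    have hij' : s(vna n i, vna n (i+1)) = s(vna n j, vna n (j+1)) := hij
    rw [vna_lt (by omega : i < n), vna_lt hi1, vna_lt (by omega : j < n), vna_lt hj1,
      Sym2.eq_iff] at hij'
    rcases hij' with ⟨h, -⟩ | ⟨h, h'⟩
    · simpa using h
    · simp only [Sum.inl.injEq, Fin.mk.injEq] at h h'
      omega

/-- endpoint profile: apex node if vertex i sits there, else the branch of its node -/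
noncomputable def Fn (i : ℕ) : D.β :=
  if bofi D i = bs D then bs D else cn D (bofi D i)

lemma Fn_eq_bs_iff (i : ℕ) : Fn D i = bs D ↔ bofi D i = bs D := by
  constructor
  · intro h
    by_contra hb
    rw [Fn, if_neg hb] at h
    exact cn_ne_bs D hb h
  · intro h; rw [Fn, if_pos h]

lemma card_F_fiber (hth : D.ThickLE m) (hcr : D.CrossLE m) (u : D.β) :
    ((Finset.range n).filter (fun i => Fn D i = u)).card ≤ 2 * m := by
  classical
  by_cases hu : u = bs D
  · have he : ((Finset.range n).filter (fun i => Fn D i = u)) =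
        ((Finset.range n).filter (fun i => bofi D i = bs D)) := by
      apply Finset.filter_congr
      intro i _
      rw [hu]
      simpa using Fn_eq_bs_iff D i
    rw [he]
    calc _ ≤ m := card_b_fiber D hth (bs D)
    _ ≤ 2 * m := by omega
  · have hbu : bs D ≠ u := Ne.symm hu
    have hsub : ((Finset.range n).filter (fun i => Fn D i = u)) ⊆
        ((Finset.range n).filter (fun i => bofi D i = u)) ∪
        ((Finset.range n).filter (fun i => ∃ h1 : bofi D i ≠ u,
          ¬ (D.T.induce {x | x ≠ u}).Reachable ⟨bs D, hbu⟩ ⟨bofi D i, h1⟩)) := by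
      intro i hi
      rw [Finset.mem_filter] at hi
      obtain ⟨hir, hFu⟩ := hi
      have hib : bofi D i ≠ bs D := by
        intro h
        exact hu ((Fn_eq_bs_iff D i).mpr h ▸ hFu.symm) |>.elim
      have hcni : cn D (bofi D i) = u := by rwa [Fn, if_neg hib] at hFu
      rcases eq_or_ne (bofi D i) u with h | h
      · exact Finset.mem_union_left _ (Finset.mem_filter.mpr ⟨hir, h⟩)
      · refine Finset.mem_union_right _ (Finset.mem_filter.mpr ⟨hir, h, ?_⟩)
        subst hcni
        exact K1 D hib h hbu h
    calc _ ≤ _ := Finset.card_le_card hsub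
    _ ≤ _ := Finset.card_union_le _ _
    _ ≤ m + m := Nat.add_le_add (card_b_fiber D hth u) (card_apex_cross D hcr u hbu)
    _ = 2 * m := by omega

lemma card_changes (hth : D.ThickLE m) (hcr : D.CrossLE m) :
    ((Finset.range n).filter (fun j => j + 1 < n ∧ Fn D j ≠ Fn D (j+1))).card ≤ 3 * m := by
  classical
  have hC2 : ((Finset.range n).filter (fun j => j + 1 < n ∧ bofi D (j+1) = bs D)).card ≤ m := by
    have hinj : Set.InjOn (· + 1)
        ((Finset.range n).filter (fun j => j + 1 < n ∧ bofi D (j+1) = bs D)) := by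
      intro a _ b _ h; exact Nat.add_right_cancel h
    rw [← Finset.card_image_of_injOn hinj]
    refine le_trans (Finset.card_le_card ?_) (card_b_fiber D hth (bs D))
    intro x hx
    simp only [Finset.mem_image, Finset.mem_filter, Finset.mem_range] at hx ⊢
    obtain ⟨a, ⟨-, ha1, ha2⟩, rfl⟩ := hx
    exact ⟨ha1, ha2⟩
  have hsub : ((Finset.range n).filter (fun j => j + 1 < n ∧ Fn D j ≠ Fn D (j+1))) ⊆
      (((Finset.range n).filter (fun i => bofi D i = bs D)) ∪
       ((Finset.range n).filter (fun j => j + 1 < n ∧ bofi D (j+1) = bs D))) ∪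
      ((Finset.range n).filter (fun j => j + 1 < n ∧ ∃ (h1 : bofi D j ≠ bs D)
        (h2 : bofi D (j+1) ≠ bs D),
        ¬ (D.T.induce {x | x ≠ bs D}).Reachable ⟨bofi D j, h1⟩ ⟨bofi D (j+1), h2⟩)) := by
    intro j hj
    rw [Finset.mem_filter] at hj
    obtain ⟨hjr, hj1, hFne⟩ := hj
    by_cases hb1 : bofi D j = bs D
    · exact Finset.mem_union_left _ (Finset.mem_union_left _ (Finset.mem_filter.mpr ⟨hjr, hb1⟩))
    by_cases hb2 : bofi D (j+1) = bs D
    · exact Finset.mem_union_left _ (Finset.mem_union_right _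
        (Finset.mem_filter.mpr ⟨hjr, hj1, hb2⟩))
    refine Finset.mem_union_right _ (Finset.mem_filter.mpr ⟨hjr, hj1, hb1, hb2, ?_⟩)
    have hcne : cn D (bofi D j) ≠ cn D (bofi D (j+1)) := by
      rw [Fn, if_neg hb1, Fn, if_neg hb2] at hFne
      exact hFne
    exact K2 D hb1 hb2 hcne
  calc _ ≤ _ := Finset.card_le_card hsub
  _ ≤ _ := Finset.card_union_le _ _
  _ ≤ (m + m) + m := by
      refine Nat.add_le_add (le_trans (Finset.card_union_le _ _) ?_) (card_path_cross D hcr)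
      exact Nat.add_le_add (card_b_fiber D hth (bs D)) hC2
  _ = 3 * m := by omega

lemma card_image_F (hth : D.ThickLE m) (hcr : D.CrossLE m) :
    ((Finset.range n).image (Fn D)).card ≤ 3 * m + 1 := by
  classical
  set C := ((Finset.range n).filter (fun j => j + 1 < n ∧ Fn D j ≠ Fn D (j+1))) with hC
  set g : D.β → ℕ := fun u =>
    if h : ((Finset.range n).filter (fun i => Fn D i = u)).Nonempty
    then ((Finset.range n).filter (fun i => Fn D i = u)).min' h else 0 with hg
  have hfib : ∀ u ∈ (Finset.range n).image (Fn D),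
      g u ∈ (Finset.range n).filter (fun i => Fn D i = u) ∧
      ∀ j ∈ (Finset.range n).filter (fun i => Fn D i = u), g u ≤ j := by
    intro u hu
    obtain ⟨i, hi, rfl⟩ := Finset.mem_image.mp hu
    have hne : ((Finset.range n).filter (fun j => Fn D j = Fn D i)).Nonempty :=
      ⟨i, Finset.mem_filter.mpr ⟨hi, rfl⟩⟩
    rw [hg]
    simp only [dif_pos hne]
    exact ⟨Finset.min'_mem _ _, fun j hj => Finset.min'_le _ j hj⟩
  have hmaps : ∀ u ∈ (Finset.range n).image (Fn D), g u ∈ insert 0 (C.image (· + 1)) := by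
    intro u hu
    obtain ⟨hmem, hmin⟩ := hfib u hu
    rw [Finset.mem_filter, Finset.mem_range] at hmem
    rcases Nat.eq_zero_or_pos (g u) with h0 | hpos
    · rw [h0]; exact Finset.mem_insert_self _ _
    · refine Finset.mem_insert_of_mem ?_
      rw [Finset.mem_image]
      refine ⟨g u - 1, ?_, by omega⟩
      rw [hC, Finset.mem_filter, Finset.mem_range]
      have hgu : g u - 1 + 1 = g u := by omega
      refine ⟨by omega, by omega, ?_⟩
      rw [hgu]
      intro heq
      have : g u ≤ g u - 1 := hmin _ (Finset.mem_filter.mpr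
        ⟨Finset.mem_range.mpr (by omega), heq ▸ hmem.2⟩)
      omega
  have hinj : Set.InjOn g ((Finset.range n).image (Fn D)) := by
    intro u hu u' hu' heq
    have h1 := (hfib u hu).1
    have h2 := (hfib u' hu').1
    rw [Finset.mem_filter] at h1 h2
    rw [← h1.2, ← h2.2, heq]
  calc ((Finset.range n).image (Fn D)).card ≤ (insert 0 (C.image (· + 1))).card :=
        Finset.card_le_card_of_injOn g hmaps hinj
  _ ≤ (C.image (· + 1)).card + 1 := Finset.card_insert_le _ _
  _ ≤ C.card + 1 := Nat.add_le_add_right (Finset.card_image_le) 1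
  _ ≤ 3 * m + 1 := Nat.add_le_add_right (card_changes D hth hcr) 1

lemma fan_count (hth : D.ThickLE m) (hcr : D.CrossLE m) : n ≤ (3 * m + 1) * (2 * m) := by
  classical
  have hcount := Finset.card_eq_sum_card_fiberwise
    (f := Fn D) (s := Finset.range n) (t := (Finset.range n).image (Fn D))
    (fun x hx => Finset.mem_image_of_mem _ hx)
  have hsum : ∑ u ∈ (Finset.range n).image (Fn D),
      ((Finset.range n).filter (fun i => Fn D i = u)).card ≤
      ((Finset.range n).image (Fn D)).card * (2 * m) := by
    rw [← smul_eq_mul]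
    exact Finset.sum_le_card_nsmul _ _ _ (fun u _ => card_F_fiber D hth hcr u)
  have := le_trans (le_of_eq hcount) hsum
  rw [Finset.card_range] at hcount
  calc n = _ := hcount
  _ ≤ _ := hsum
  _ ≤ (3 * m + 1) * (2 * m) :=
      Nat.mul_le_mul_right _ (card_image_F D hth hcr)

end FanCount



/-- For every integer `k ≥ 3`, the `(6k² − 6k − 1)`-fan has edge-crossing width
at least `k`. -/
theorem stmt_8 (k : ℕ) (hk : 3 ≤ k) : k ≤ ecrw (fan (6 * k ^ 2 - 6 * k - 1)) := by
  set n := 6 * k ^ 2 - 6 * k - 1 with hn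
  rw [ecrw]
  have hne : {j | ∃ D : TreeCutDecomp (fan n), D.ThickLE j ∧ D.CrossLE j}.Nonempty :=
    ⟨Fintype.card (Fin n ⊕ Unit),
      trivDecomp (fan n), trivDecomp_thick (fan n), trivDecomp_cross (fan n) _⟩
  refine le_csInf hne ?_
  rintro m ⟨D, hth, hcr⟩
  by_contra hlt
  push_neg at hlt
  have hcount := FanCount.fan_count D hth hcr
  obtain ⟨j, rfl⟩ : ∃ j, k = j + 3 := ⟨k - 3, by omega⟩
  have hm : m ≤ j + 2 := by omega
  have hnval : n = 6 * j * j + 30 * j + 35 := by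
    have e : 6 * (j + 3) ^ 2 = 6 * j * j + 36 * j + 54 := by ring
    rw [hn, e]
    omega
  have h2 : (3 * m + 1) * (2 * m) ≤ (3 * (j + 2) + 1) * (2 * (j + 2)) :=
    Nat.mul_le_mul (by omega) (by omega)
  have h3 : (3 * (j + 2) + 1) * (2 * (j + 2)) = 6 * j * j + 26 * j + 28 := by ring
  omega
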